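/- Under the same SIR-SBM ODE system with initial data in U_0: for each k, lim_{t→∞} x_k(t) = 0 and lim_{t→∞} i_k(t) = 0. -/

import Mathlib

open Filter

/-- The SIR-SBM ODE system: `ds_k/dt = -η s_k Σ_ℓ x_ℓ W_{ℓk}`,
`di_k/dt = -γ i_k + η s_k Σ_ℓ x_ℓ W_{ℓk}`, `dx_k/dt = -(η+γ) x_k + η s_k Σ_ℓ x_ℓ W_{ℓk}`,
holding on `[0,∞)`. -/
def sirODE {K : ℕ} (W : Matrix (Fin K) (Fin K) ℝ) (η γ : ℝ)
    (s i x : ℝ → Fin K → ℝ) : Prop :=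
  ∀ k : Fin K, ∀ t ∈ Set.Ici (0 : ℝ),
    HasDerivWithinAt (fun τ => s τ k)
      (-η * s t k * ∑ l, x t l * W l k) (Set.Ici 0) t ∧
    HasDerivWithinAt (fun τ => i τ k)
      (-γ * i t k + η * s t k * ∑ l, x t l * W l k) (Set.Ici 0) t ∧
    HasDerivWithinAt (fun τ => x τ k)
      (-(η + γ) * x t k + η * s t k * ∑ l, x t l * W l k) (Set.Ici 0) t

/-- The set `U₀ = { y ∈ [0,∞)^{3K} : Σ_k (s_k + i_k) ≤ 1, Σ_k (s_k + x_k) ≤ 2 }`. -/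
def inU0 {K : ℕ} (s i x : Fin K → ℝ) : Prop :=
  (∀ k, 0 ≤ s k) ∧ (∀ k, 0 ≤ i k) ∧ (∀ k, 0 ≤ x k) ∧
    (∑ k, (s k + i k)) ≤ 1 ∧ (∑ k, (s k + x k)) ≤ 2

section SirAux

open Set Topology


lemma sir_aux_antitoneOn {f f' : ℝ → ℝ} {a : ℝ}
    (hf : ∀ t ∈ Ici a, HasDerivWithinAt f (f' t) (Ici a) t)
    (h' : ∀ t ∈ Ici a, f' t ≤ 0) : AntitoneOn f (Ici a) := by
  apply antitoneOn_of_deriv_nonpos (convex_Ici a)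
      (fun t ht => (hf t ht).continuousWithinAt)
  · intro t ht
    rw [interior_Ici] at ht
    exact ((hf t (le_of_lt ht : a ≤ t)).hasDerivAt (Ici_mem_nhds ht)).differentiableAt.differentiableWithinAt
  · intro t ht
    rw [interior_Ici] at ht
    rw [((hf t (ht.le : a ≤ t)).hasDerivAt (Ici_mem_nhds ht)).deriv]
    exact h' t (ht.le : a ≤ t)

lemma sir_aux_tendsto_of_antitone {f : ℝ → ℝ} {c : ℝ}
    (hf : AntitoneOn f (Ici 0)) (hc : ∀ t ∈ Ici (0:ℝ), c ≤ f t) :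
    ∃ L, c ≤ L ∧ Tendsto f atTop (𝓝 L) := by
  set g : ℝ → ℝ := fun t => f (max t 0) with hg_def
  have hg : Antitone g := fun t u htu =>
    hf (le_max_right t 0) (le_max_right u 0) (max_le_max htu le_rfl)
  have hbdd : BddBelow (Set.range g) := by
    refine ⟨c, ?_⟩; rintro y ⟨t, rfl⟩; exact hc _ (le_max_right t 0)
  have hgt := tendsto_atTop_ciInf hg hbdd
  have hfg : f =ᶠ[atTop] g := by
    filter_upwards [eventually_ge_atTop (0:ℝ)] with t ht
    simp [hg_def, max_eq_left ht]
  refine ⟨_, ?_, hgt.congr' hfg.symm⟩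
  exact ge_of_tendsto hgt (Eventually.of_forall fun t => hc _ (le_max_right t 0))

/-- Key vanishing lemma: if `u + v` has right derivative `≤ -c·u`, with `u,v ≥ 0` and
`v` convergent, then `u → 0`. -/
lemma sir_aux_tendsto_zero {u v du : ℝ → ℝ} {c : ℝ} (hc : 0 < c)
    (hder : ∀ t ∈ Ici (0:ℝ), HasDerivWithinAt (fun τ => u τ + v τ) (du t) (Ici 0) t)
    (hdu : ∀ t ∈ Ici (0:ℝ), du t ≤ -c * u t)
    (hu : ∀ t ∈ Ici (0:ℝ), 0 ≤ u t) (hv : ∀ t ∈ Ici (0:ℝ), 0 ≤ v t)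
    (hvlim : ∃ S, Tendsto v atTop (𝓝 S)) : Tendsto u atTop (𝓝 0) := by
  obtain ⟨S, hS⟩ := hvlim
  set w : ℝ → ℝ := fun t => u t + v t with hw_def
  have hwA : AntitoneOn w (Ici 0) :=
    sir_aux_antitoneOn hder fun t ht => (hdu t ht).trans (by nlinarith [hu t ht])
  have hw0 : ∀ t ∈ Ici (0:ℝ), (0:ℝ) ≤ w t := fun t ht => add_nonneg (hu t ht) (hv t ht)
  obtain ⟨L, hL0, hLlim⟩ := sir_aux_tendsto_of_antitone hwA hw0
  have hulim : Tendsto u atTop (𝓝 (L - S)) := by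
    have := hLlim.sub hS
    simpa [hw_def] using this
  have hX0 : 0 ≤ L - S :=
    ge_of_tendsto hulim ((eventually_ge_atTop (0:ℝ)).mono fun t ht => hu t ht)
  rcases eq_or_lt_of_le hX0 with h | h
  · rwa [← h] at hulim
  · exfalso
    set X := L - S with hX_def
    have hev : ∀ᶠ t in atTop, X / 2 < u t :=
      hulim.eventually (eventually_gt_nhds (by linarith))
    obtain ⟨a, ha⟩ := eventually_atTop.1 (hev.and (eventually_ge_atTop (0:ℝ)))
    set t₀ : ℝ := max a 0 with ht₀_def
    have ht₀0 : (0:ℝ) ≤ t₀ := le_max_right a 0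
    have hall : ∀ t ≥ t₀, X / 2 < u t ∧ 0 ≤ t := fun t ht => ha t ((le_max_left a 0).trans ht)
    set c2 : ℝ := c * (X / 2) with hc2_def
    have hc2 : 0 < c2 := by positivity
    have hφ : AntitoneOn (fun t => w t + c2 * t) (Ici t₀) := by
      apply sir_aux_antitoneOn (f' := fun t => du t + c2)
      · intro t ht
        have h1 := (hder t (ht₀0.trans ht)).mono (Ici_subset_Ici.2 ht₀0)
        have h2 : HasDerivWithinAt (fun τ : ℝ => c2 * τ) c2 (Ici t₀) t := by
          simpa using ((hasDerivAt_id t).const_mul c2).hasDerivWithinAt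
        exact h1.add h2
      · intro t ht
        have h1 := (hall t ht).1
        have h2 := hdu t (ht₀0.trans ht)
        nlinarith
    set T : ℝ := max t₀ ((w t₀ + c2 * t₀ + 1) / c2) with hT_def
    have hT1 : t₀ ≤ T := le_max_left _ _
    have hT2 : (w t₀ + c2 * t₀ + 1) / c2 ≤ T := le_max_right _ _
    have hφT := hφ (self_mem_Ici) (mem_Ici.2 hT1) hT1
    have hwT : 0 ≤ w T := hw0 T (ht₀0.trans hT1)
    have : w t₀ + c2 * t₀ + 1 ≤ c2 * T := by
      rw [div_le_iff₀ hc2] at hT2; linarith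
    simp only at hφT
    linarith

lemma sir_aux_monotoneOn {f f' : ℝ → ℝ} {a : ℝ}
    (hf : ∀ t ∈ Ici a, HasDerivWithinAt f (f' t) (Ici a) t)
    (h' : ∀ t ∈ Ici a, 0 ≤ f' t) : MonotoneOn f (Ici a) := by
  apply monotoneOn_of_deriv_nonneg (convex_Ici a)
      (fun t ht => (hf t ht).continuousWithinAt)
  · intro t ht
    rw [interior_Ici] at ht
    exact ((hf t (le_of_lt ht : a ≤ t)).hasDerivAt (Ici_mem_nhds ht)).differentiableAt.differentiableWithinAt
  · intro t ht
    rw [interior_Ici] at ht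
    rw [((hf t (ht.le : a ≤ t)).hasDerivAt (Ici_mem_nhds ht)).deriv]
    exact h' t (ht.le : a ≤ t)

/-- Nonnegativity preserved for `f' = c·f + b`, `b ≥ 0`, `c` continuous. -/
lemma sir_aux_nonneg {f c b : ℝ → ℝ} (hc : Continuous c)
    (hb : ∀ t ∈ Ici (0:ℝ), 0 ≤ b t)
    (hf : ∀ t ∈ Ici (0:ℝ), HasDerivWithinAt f (c t * f t + b t) (Ici 0) t)
    (h0 : 0 ≤ f 0) : ∀ t ∈ Ici (0:ℝ), 0 ≤ f t := by
  set F : ℝ → ℝ := fun t => ∫ τ in (0:ℝ)..t, c τ with hF_def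
  have hF : ∀ t, HasDerivAt F (c t) t := fun t => (hc.integral_hasStrictDerivAt 0 t).hasDerivAt
  set g : ℝ → ℝ := fun t => f t * Real.exp (-F t) with hg_def
  have hg : ∀ t ∈ Ici (0:ℝ), HasDerivWithinAt g (b t * Real.exp (-F t)) (Ici 0) t := by
    intro t ht
    have hE : HasDerivAt (fun τ => Real.exp (-F τ)) (Real.exp (-F t) * -c t) t :=
      ((hF t).neg).exp
    have := (hf t ht).mul hE.hasDerivWithinAt
    exact this.congr_deriv (by ring)
  have hmono : MonotoneOn g (Ici 0) :=
    sir_aux_monotoneOn hg fun t ht => mul_nonneg (hb t ht) (Real.exp_nonneg _)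
  intro t ht
  have hg0 : g 0 = f 0 := by
    simp [hg_def, hF_def, intervalIntegral.integral_same]
  have h2 := hmono (self_mem_Ici) ht ht
  rw [hg0] at h2
  simp only [hg_def] at h2
  have hexp := Real.exp_pos (-F t)
  nlinarith [h2]



lemma sir_x_nonneg {K : ℕ} (W : Matrix (Fin K) (Fin K) ℝ) (hW : ∀ k l, 0 ≤ W k l)
    {η γ : ℝ} (hη : 0 < η) (hγ : 0 < γ) {s x : ℝ → Fin K → ℝ}
    (hs : ∀ t ∈ Ici (0:ℝ), ∀ k, 0 ≤ s t k)
    (hsc : ∀ k, ContinuousOn (fun t => s t k) (Ici (0:ℝ)))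
    (hx' : ∀ k, ∀ t ∈ Ici (0:ℝ), HasDerivWithinAt (fun τ => x τ k)
      (-(η + γ) * x t k + η * s t k * ∑ l, x t l * W l k) (Ici 0) t)
    (h0 : ∀ k, 0 ≤ x 0 k) :
    ∀ t ∈ Ici (0:ℝ), ∀ k, 0 ≤ x t k := by
  intro T hT
  rw [mem_Ici] at hT
  set f : ℝ → ℝ := fun t => ∑ k, max (-(x t k)) 0 with hf_def
  have hf_nonneg : ∀ t, 0 ≤ f t := fun t => Finset.sum_nonneg fun k _ => le_max_right _ _
  have hcx : ∀ k, ContinuousOn (fun t => x t k) (Ici (0:ℝ)) :=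
    fun k t ht => (hx' k t ht).continuousWithinAt
  have hfc : ContinuousOn f (Icc 0 T) :=
    continuousOn_finset_sum _ fun k _ =>
      (((hcx k).mono Icc_subset_Ici_self).neg).sup continuousOn_const
  have hScont : ContinuousOn (fun t => ∑ j, s t j) (Icc 0 T) :=
    continuousOn_finset_sum _ fun j _ => (hsc j).mono Icc_subset_Ici_self
  obtain ⟨tm, htm, hM⟩ := (isCompact_Icc (a := (0:ℝ)) (b := T)).exists_isMaxOn
    ⟨0, left_mem_Icc.2 hT⟩ hScont
  set M : ℝ := ∑ j, s tm j with hM_def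
  have hM0 : 0 ≤ M := Finset.sum_nonneg fun j _ => hs tm (Icc_subset_Ici_self htm) j
  set CW : ℝ := ∑ p, ∑ q, W p q with hCW_def
  have hCW0 : 0 ≤ CW := Finset.sum_nonneg fun p _ => Finset.sum_nonneg fun q _ => hW p q
  set C : ℝ := η * M * CW with hC_def
  have hC0 : 0 ≤ C := by positivity
  have hcoef : ∀ t ∈ Icc (0:ℝ) T, ∀ k l, η * s t k * W l k ≤ C := by
    intro t htt k l
    have h1 : s t k ≤ M :=
      le_trans (Finset.single_le_sum (fun j _ => hs t (Icc_subset_Ici_self htt) j)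
        (Finset.mem_univ k)) (hM htt)
    have h2 : W l k ≤ CW := by
      calc W l k ≤ ∑ q, W l q :=
            Finset.single_le_sum (fun q _ => hW l q) (Finset.mem_univ k)
        _ ≤ ∑ p, ∑ q, W p q :=
            Finset.single_le_sum (fun p _ => Finset.sum_nonneg fun q _ => hW p q)
              (Finset.mem_univ l)
    have h3 : 0 ≤ s t k := hs t (Icc_subset_Ici_self htt) k
    have h4 := hW l k
    have h5 : η * s t k ≤ η * M := mul_le_mul_of_nonneg_left h1 hη.le
    exact mul_le_mul h5 h2 h4 (by positivity)
  set Kc : ℝ := (K : ℝ) * C with hKc_def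
  have key : ∀ t ∈ Icc (0:ℝ) T, f t ≤ gronwallBound 0 Kc 0 (t - 0) := by
    apply le_gronwallBound_of_liminf_deriv_right_le (f' := fun t => Kc * f t) hfc
    · -- frequently slope bound
      intro t htt r hr
      have ht0 : (0:ℝ) ≤ t := htt.1
      apply Eventually.frequently
      set ε : ℝ := (r - Kc * f t) / ((K : ℝ) + 1) with hε_def
      have hKc_ft : 0 ≤ Kc * f t :=
        mul_nonneg (mul_nonneg (Nat.cast_nonneg K) hC0) (hf_nonneg t)
      have hε0 : 0 < ε := by
        apply div_pos (by linarith) (by positivity)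
      have hsub : Ioi t ⊆ Ici (0:ℝ) := fun z hz => le_trans ht0 (le_of_lt hz)
      have hle : 𝓝[>] t ≤ 𝓝[Ici 0] t := nhdsWithin_mono t hsub
      have hCft : 0 ≤ C * f t := mul_nonneg hC0 (hf_nonneg t)
      have hper : ∀ k, ∀ᶠ z in 𝓝[>] t,
          (z - t)⁻¹ * (max (-(x z k)) 0 - max (-(x t k)) 0) ≤ C * f t + ε := by
        intro k
        rcases lt_or_ge 0 (x t k) with hpos | hneg
        · have hcont : ContinuousWithinAt (fun τ => x τ k) (Ici 0) t := (hcx k) t ht0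
          have h1 : ∀ᶠ z in 𝓝[Ici 0] t, 0 < x z k := hcont (Ioi_mem_nhds hpos)
          filter_upwards [hle h1] with z hz
          rw [max_eq_right (by linarith : -(x z k) ≤ 0),
            max_eq_right (by linarith : -(x t k) ≤ 0)]
          simpa using add_nonneg hCft hε0.le
        · set d : ℝ := -(η + γ) * x t k + η * s t k * ∑ l, x t l * W l k with hd_def
          have httIcc : t ∈ Icc (0:ℝ) T := ⟨ht0, htt.2.le⟩
          have hd : -d ≤ C * f t := by
            have e1 : ∑ l, (η * s t k * W l k) * (-(x t l))
                = -(η * s t k * ∑ l, x t l * W l k) := by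
              rw [Finset.mul_sum, ← Finset.sum_neg_distrib]
              exact Finset.sum_congr rfl fun l _ => by ring
            have e3 : ∑ l, (η * s t k * W l k) * (-(x t l)) ≤ C * f t := by
              rw [hf_def, Finset.mul_sum]
              refine Finset.sum_le_sum fun l _ => ?_
              have hco : 0 ≤ η * s t k * W l k :=
                mul_nonneg (mul_nonneg hη.le (hs t (Icc_subset_Ici_self httIcc) k)) (hW l k)
              rcases le_or_gt (-(x t l)) 0 with hneg2 | hpos2
              · have := mul_nonpos_of_nonneg_of_nonpos hco hneg2
                have : 0 ≤ C * max (-(x t l)) 0 := mul_nonneg hC0 (le_max_right _ _)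
                nlinarith [mul_nonpos_of_nonneg_of_nonpos hco hneg2]
              · rw [max_eq_left hpos2.le]
                exact mul_le_mul_of_nonneg_right (hcoef t httIcc k l) hpos2.le
            have h5 : (η + γ) * x t k ≤ 0 := mul_nonpos_of_nonneg_of_nonpos (by linarith) hneg
            have e2 : -d = (η + γ) * x t k + ∑ l, (η * s t k * W l k) * (-(x t l)) := by
              rw [hd_def, e1]; ring
            linarith [e2.le, e2.ge]
          have hder := hx' k t ht0
          rw [hasDerivWithinAt_iff_tendsto_slope] at hder
          have hsub2 : Ioi t ⊆ Ici (0:ℝ) \ {t} :=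
            fun z hz => ⟨hsub hz, ne_of_gt hz⟩
          have hslope := hder.mono_left (nhdsWithin_mono t hsub2)
          have hev2 : ∀ᶠ z in 𝓝[>] t, d - ε < slope (fun τ => x τ k) t z :=
            hslope.eventually (eventually_gt_nhds (by linarith))
          filter_upwards [hev2, self_mem_nhdsWithin] with z hz1 hz2
          have hzt : (0:ℝ) < z - t := sub_pos.2 hz2
          have hp : (0:ℝ) < (z - t)⁻¹ := inv_pos.2 hzt
          rw [slope_def_field] at hz1
          rw [max_eq_left (neg_nonneg.2 hneg)]
          rcases le_or_gt (x z k) 0 with hzneg | hzpos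
          · rw [max_eq_left (neg_nonneg.2 hzneg)]
            have e4 : (z - t)⁻¹ * (-(x z k) - -(x t k)) = -((x z k - x t k) / (z - t)) := by
              rw [div_eq_mul_inv]; ring
            linarith
          · rw [max_eq_right (by linarith : -(x z k) ≤ 0)]
            have h6 : (z - t)⁻¹ * (x t k) ≤ 0 := mul_nonpos_of_nonneg_of_nonpos hp.le hneg
            have e4 : (z - t)⁻¹ * (0 - -(x t k)) = (z - t)⁻¹ * (x t k) := by ring
            linarith
      have hall : ∀ᶠ z in 𝓝[>] t, ∀ k, (z - t)⁻¹ *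
          (max (-(x z k)) 0 - max (-(x t k)) 0) ≤ C * f t + ε := eventually_all.2 hper
      filter_upwards [hall] with z hz
      have e5 : (z - t)⁻¹ * (f z - f t)
          = ∑ k, (z - t)⁻¹ * (max (-(x z k)) 0 - max (-(x t k)) 0) := by
        rw [hf_def, ← Finset.sum_sub_distrib, Finset.mul_sum]
      have h7 : ∑ k : Fin K, (z - t)⁻¹ * (max (-(x z k)) 0 - max (-(x t k)) 0)
          ≤ (K : ℝ) * (C * f t + ε) := by
        calc (∑ k : Fin K, (z - t)⁻¹ * (max (-(x z k)) 0 - max (-(x t k)) 0))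
            ≤ ∑ _k : Fin K, (C * f t + ε) := Finset.sum_le_sum fun k _ => hz k
          _ = (K : ℝ) * (C * f t + ε) := by
              rw [Finset.sum_const, Finset.card_univ, Fintype.card_fin, nsmul_eq_mul]
      have hKε : ((K : ℝ) + 1) * ε = r - Kc * f t := by
        rw [hε_def]; field_simp
      have h8 : (K : ℝ) * (C * f t + ε) < r := by
        have e6 : (K : ℝ) * (C * f t + ε) = Kc * f t + (K : ℝ) * ε := by
          rw [hKc_def]; ring
        nlinarith
      rw [e5]; linarith
    · -- f 0 ≤ 0
      have : f 0 = 0 := by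
        rw [hf_def]
        exact Finset.sum_eq_zero fun k _ => max_eq_right (neg_nonpos.2 (h0 k))
      linarith
    · intro t _
      simp
  have hfT := key T (right_mem_Icc.2 hT)
  rw [sub_zero, gronwallBound_ε0_δ0] at hfT
  intro k
  have h8 : max (-(x T k)) 0 = 0 := by
    have := (Finset.sum_eq_zero_iff_of_nonneg fun j (_ : j ∈ Finset.univ) =>
      le_max_right (-(x T j)) 0).1 (le_antisymm hfT (hf_nonneg T)) k (Finset.mem_univ k)
    exact this
  have h9 := le_max_left (-(x T k)) 0
  rw [h8] at h9
  linarith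

end SirAux

section SirMain

open Set Topology

/-- For solutions of the SIR-SBM system with initial data in `U₀`,
`x_k(t) → 0` and `i_k(t) → 0` as `t → ∞`, for every `k`. -/
theorem stmt6 {K : ℕ} (W : Matrix (Fin K) (Fin K) ℝ) (hW : ∀ k l, 0 ≤ W k l)
    (η γ : ℝ) (hη : 0 < η) (hγ : 0 < γ)
    (s i x : ℝ → Fin K → ℝ) (hODE : sirODE W η γ s i x)
    (h0 : inU0 (s 0) (i 0) (x 0)) :
    ∀ k : Fin K, Tendsto (fun t => x t k) atTop (nhds 0) ∧
      Tendsto (fun t => i t k) atTop (nhds 0) := by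
  obtain ⟨hs0, hi0, hx0, -, -⟩ := h0
  have hcx : ∀ l, ContinuousOn (fun t => x t l) (Ici (0:ℝ)) :=
    fun l t ht => ((hODE l t ht).2.2).continuousWithinAt
  have hcs : ∀ l, ContinuousOn (fun t => s t l) (Ici (0:ℝ)) :=
    fun l t ht => ((hODE l t ht).1).continuousWithinAt
  -- nonnegativity of s
  have hsnn : ∀ j, ∀ t ∈ Ici (0:ℝ), 0 ≤ s t j := by
    intro j
    have hc : Continuous (fun τ : ℝ => -η * ∑ l, x (max τ 0) l * W l j) := by
      apply continuous_const.mul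
      apply continuous_finset_sum
      intro l _
      exact ((hcx l).comp_continuous (continuous_id.max continuous_const)
        (fun τ => le_max_right τ 0)).mul continuous_const
    apply sir_aux_nonneg (c := fun τ => -η * ∑ l, x (max τ 0) l * W l j)
      (b := fun _ => 0) hc (fun t _ => le_rfl) ?_ (hs0 j)
    intro t ht
    have h1 := (hODE j t ht).1
    rw [mem_Ici] at ht
    convert h1 using 1
    rw [max_eq_left ht]
    ring
  have hsnn' : ∀ t ∈ Ici (0:ℝ), ∀ j, 0 ≤ s t j := fun t ht j => hsnn j t ht
  -- nonnegativity of x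
  have hxnn : ∀ t ∈ Ici (0:ℝ), ∀ j, 0 ≤ x t j :=
    sir_x_nonneg W hW hη hγ hsnn' hcs (fun k t ht => (hODE k t ht).2.2) hx0
  -- main arguments
  intro k
  have hsum_x : ∀ t ∈ Ici (0:ℝ), 0 ≤ ∑ l, x t l * W l k := fun t ht =>
    Finset.sum_nonneg fun l _ => mul_nonneg (hxnn t ht l) (hW l k)
  have hsA : AntitoneOn (fun t => s t k) (Ici 0) := by
    apply sir_aux_antitoneOn (f' := fun t => -η * s t k * ∑ l, x t l * W l k)
      (fun t ht => (hODE k t ht).1)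
    intro t ht
    have h1 := mul_nonneg (mul_nonneg hη.le (hsnn' t ht k)) (hsum_x t ht)
    nlinarith
  obtain ⟨S, -, hS⟩ := sir_aux_tendsto_of_antitone hsA (fun t ht => hsnn' t ht k)
  constructor
  · -- x → 0
    apply sir_aux_tendsto_zero (v := fun t => s t k)
      (du := fun t => -(η + γ) * x t k) (c := η + γ) (by positivity) ?_
      (fun t ht => le_rfl) (fun t ht => hxnn t ht k) (fun t ht => hsnn' t ht k) ⟨S, hS⟩
    intro t ht
    have h1 := (hODE k t ht).2.2
    have h2 := (hODE k t ht).1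
    exact (h1.add h2).congr_deriv (by ring)
  · -- i → 0
    -- nonnegativity of i
    have hinn : ∀ t ∈ Ici (0:ℝ), 0 ≤ i t k := by
      apply sir_aux_nonneg (c := fun _ => -γ)
        (b := fun t => η * s t k * ∑ l, x t l * W l k) continuous_const ?_ ?_ (hi0 k)
      · intro t ht
        exact mul_nonneg (mul_nonneg hη.le (hsnn' t ht k)) (hsum_x t ht)
      · intro t ht
        exact (hODE k t ht).2.1
    apply sir_aux_tendsto_zero (v := fun t => s t k)
      (du := fun t => -γ * i t k) (c := γ) hγ ?_
      (fun t ht => le_rfl) hinn (fun t ht => hsnn' t ht k) ⟨S, hS⟩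
    intro t ht
    have h1 := (hODE k t ht).2.1
    have h2 := (hODE k t ht).1
    exact (h1.add h2).congr_deriv (by ring)

end SirMain
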